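/- arXiv:0808.2799 — 3 statements merged into one kernel-verified Lean document; each statement's English description precedes it below -/
import Mathlib

section
/- Let (Φ1,Φ2,Φ3) be a Cliff(1,1)-structure on (V,g) of signature (2,2), and let R := λ0 R_0 + Σᵢ λᵢ R_{Φᵢ} + Σ_{i<j} λᵢⱼ [R_{Φᵢ} + R_{Φⱼ} - R_{(Φᵢ-Φⱼ)}] for real constants λ0, λᵢ, λᵢⱼ. Then for every unit timelike x, the matrix of the Jacobi operator J_R(x) restricted to x^⊥ with respect to the basis {Φ1x, Φ2x, Φ3x} equals [[λ0-3λ1, 3λ12, 3λ13], [-3λ12, λ0+3λ2, 3λ23], [-3λ13, 3λ23, λ0+3λ3]], independent of the choice of x. -/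
/-- `R₀(x,y)z := g(x,z)y - g(y,z)x`. -/
def R0V {V : Type*} [AddCommGroup V] [Module ℝ V]
    (g : V →ₗ[ℝ] V →ₗ[ℝ] ℝ) (x y z : V) : V :=
  g x z • y - g y z • x

/-- `R_Φ(x,y)z := g(Φy,z)Φx - g(Φx,z)Φy - 2g(Φx,y)Φz`. -/
def RPhiV {V : Type*} [AddCommGroup V] [Module ℝ V]
    (g : V →ₗ[ℝ] V →ₗ[ℝ] ℝ) (Φ : V →ₗ[ℝ] V) (x y z : V) : V :=
  g (Φ y) z • Φ x - g (Φ x) z • Φ y - (2 * g (Φ x) y) • Φ z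

/-- The curvature tensor `λ₀R₀ + Σᵢ λᵢ R_{Φᵢ} + Σ_{i<j} λᵢⱼ[R_{Φᵢ}+R_{Φⱼ}-R_{Φᵢ-Φⱼ}]`. -/
def bigR {V : Type*} [AddCommGroup V] [Module ℝ V]
    (g : V →ₗ[ℝ] V →ₗ[ℝ] ℝ) (Φ₁ Φ₂ Φ₃ : V →ₗ[ℝ] V)
    (l0 l1 l2 l3 l12 l13 l23 : ℝ) (x y z : V) : V :=
  l0 • R0V g x y z + l1 • RPhiV g Φ₁ x y z + l2 • RPhiV g Φ₂ x y z +
    l3 • RPhiV g Φ₃ x y z +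
    l12 • (RPhiV g Φ₁ x y z + RPhiV g Φ₂ x y z - RPhiV g (Φ₁ - Φ₂) x y z) +
    l13 • (RPhiV g Φ₁ x y z + RPhiV g Φ₃ x y z - RPhiV g (Φ₁ - Φ₃) x y z) +
    l23 • (RPhiV g Φ₂ x y z + RPhiV g Φ₃ x y z - RPhiV g (Φ₂ - Φ₃) x y z)

/-- for every unit timelike `x` the matrix of the Jacobi operator
`J_R(x)` on `x^⊥` in the basis `{Φ₁x, Φ₂x, Φ₃x}` is the fixed matrix
`[[λ₀-3λ₁, 3λ₁₂, 3λ₁₃], [-3λ₁₂, λ₀+3λ₂, 3λ₂₃], [-3λ₁₃, 3λ₂₃, λ₀+3λ₃]]`. -/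
theorem jacobi_matrix_of_bigR {V : Type*} [AddCommGroup V] [Module ℝ V]
    (g : V →ₗ[ℝ] V →ₗ[ℝ] ℝ) (hsymm : ∀ v w, g v w = g w v)
    (e : Module.Basis (Fin 4) ℝ V)
    (he : ∀ i j, g (e i) (e j) =
      if i = j then (if (i : ℕ) < 2 then (-1 : ℝ) else 1) else 0)
    (Φ₁ Φ₂ Φ₃ : V →ₗ[ℝ] V)
    (hskew₁ : ∀ v w, g (Φ₁ v) w = - g v (Φ₁ w))
    (hskew₂ : ∀ v w, g (Φ₂ v) w = - g v (Φ₂ w))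
    (hskew₃ : ∀ v w, g (Φ₃ v) w = - g v (Φ₃ w))
    (hsq₁ : Φ₁ ∘ₗ Φ₁ = -LinearMap.id)
    (hsq₂ : Φ₂ ∘ₗ Φ₂ = LinearMap.id) (hsq₃ : Φ₃ ∘ₗ Φ₃ = LinearMap.id)
    (hac₁₂ : Φ₁ ∘ₗ Φ₂ + Φ₂ ∘ₗ Φ₁ = 0) (hac₁₃ : Φ₁ ∘ₗ Φ₃ + Φ₃ ∘ₗ Φ₁ = 0)
    (hac₂₃ : Φ₂ ∘ₗ Φ₃ + Φ₃ ∘ₗ Φ₂ = 0)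
    (hK : Φ₃ = Φ₂ ∘ₗ Φ₁)
    (l0 l1 l2 l3 l12 l13 l23 : ℝ) :
    ∀ x : V, g x x = -1 → ∀ i : Fin 3,
      bigR g Φ₁ Φ₂ Φ₃ l0 l1 l2 l3 l12 l13 l23 (![Φ₁ x, Φ₂ x, Φ₃ x] i) x x =
        ∑ j : Fin 3,
          (!![l0 - 3*l1, 3*l12, 3*l13;
              -3*l12, l0 + 3*l2, 3*l23;
              -3*l13, 3*l23, l0 + 3*l3] : Matrix (Fin 3) (Fin 3) ℝ) j i •
            ![Φ₁ x, Φ₂ x, Φ₃ x] j := by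
  intro x hx i
  have hq1 : ∀ v, Φ₁ (Φ₁ v) = -v := fun v => by
    have := LinearMap.ext_iff.1 hsq₁ v; simpa using this
  have hq2 : ∀ v, Φ₂ (Φ₂ v) = v := fun v => by
    have := LinearMap.ext_iff.1 hsq₂ v; simpa using this
  have hq3 : ∀ v, Φ₃ (Φ₃ v) = v := fun v => by
    have := LinearMap.ext_iff.1 hsq₃ v; simpa using this
  have ha12 : ∀ v, Φ₁ (Φ₂ v) = -(Φ₂ (Φ₁ v)) := fun v =>
    eq_neg_of_add_eq_zero_left (by simpa using LinearMap.ext_iff.1 hac₁₂ v)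
  have ha13 : ∀ v, Φ₁ (Φ₃ v) = -(Φ₃ (Φ₁ v)) := fun v =>
    eq_neg_of_add_eq_zero_left (by simpa using LinearMap.ext_iff.1 hac₁₃ v)
  have ha23 : ∀ v, Φ₂ (Φ₃ v) = -(Φ₃ (Φ₂ v)) := fun v =>
    eq_neg_of_add_eq_zero_left (by simpa using LinearMap.ext_iff.1 hac₂₃ v)
  have hk : ∀ v, Φ₃ v = Φ₂ (Φ₁ v) := fun v => by rw [hK]; rfl
  have e11 : Φ₁ (Φ₁ x) = -x := hq1 x
  have e22 : Φ₂ (Φ₂ x) = x := hq2 x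
  have e33 : Φ₃ (Φ₃ x) = x := hq3 x
  have e21 : Φ₂ (Φ₁ x) = Φ₃ x := (hk x).symm
  have e12 : Φ₁ (Φ₂ x) = -Φ₃ x := by rw [ha12, e21]
  have e31 : Φ₃ (Φ₁ x) = -Φ₂ x := by rw [hk (Φ₁ x), e11, map_neg]
  have e13 : Φ₁ (Φ₃ x) = Φ₂ x := by rw [ha13, e31, neg_neg]
  have e23 : Φ₂ (Φ₃ x) = Φ₁ x := by rw [hk x, hq2]
  have e32 : Φ₃ (Φ₂ x) = -Φ₁ x := by
    have h := ha23 x; rw [e23] at h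
    exact neg_eq_iff_eq_neg.mp h.symm
  have g1x : g (Φ₁ x) x = 0 := by
    have h := hskew₁ x x; rw [hsymm x (Φ₁ x)] at h; linarith
  have g2x : g (Φ₂ x) x = 0 := by
    have h := hskew₂ x x; rw [hsymm x (Φ₂ x)] at h; linarith
  have g3x : g (Φ₃ x) x = 0 := by
    have h := hskew₃ x x; rw [hsymm x (Φ₃ x)] at h; linarith
  have gx1 : g x (Φ₁ x) = 0 := by rw [hsymm]; exact g1x
  have gx2 : g x (Φ₂ x) = 0 := by rw [hsymm]; exact g2x
  have gx3 : g x (Φ₃ x) = 0 := by rw [hsymm]; exact g3x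
  have g11 : g (Φ₁ x) (Φ₁ x) = -1 := by
    rw [hskew₁ x (Φ₁ x), e11, map_neg]; simp [hx]
  have g22 : g (Φ₂ x) (Φ₂ x) = 1 := by
    rw [hskew₂ x (Φ₂ x), e22, hx]; ring
  have g33 : g (Φ₃ x) (Φ₃ x) = 1 := by
    rw [hskew₃ x (Φ₃ x), e33, hx]; ring
  have g12 : g (Φ₁ x) (Φ₂ x) = 0 := by
    rw [hskew₁ x (Φ₂ x), e12, map_neg, gx3]; ring
  have g13 : g (Φ₁ x) (Φ₃ x) = 0 := by
    rw [hskew₁ x (Φ₃ x), e13, gx2]; ring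
  have g23 : g (Φ₂ x) (Φ₃ x) = 0 := by
    rw [hskew₂ x (Φ₃ x), e23, gx1]; ring
  have g21 : g (Φ₂ x) (Φ₁ x) = 0 := by rw [hsymm]; exact g12
  have g31 : g (Φ₃ x) (Φ₁ x) = 0 := by rw [hsymm]; exact g13
  have g32 : g (Φ₃ x) (Φ₂ x) = 0 := by rw [hsymm]; exact g23
  fin_cases i <;>
    simp only [Fin.isValue, Fin.zero_eta, Fin.mk_one, Fin.reduceFinMk,
      bigR, R0V, RPhiV, Matrix.cons_val_zero, Matrix.cons_val_one,
      Matrix.cons_val_two, Matrix.head_cons, Matrix.tail_cons, Matrix.cons_val_fin_one,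
      Fin.sum_univ_three, Matrix.of_apply, LinearMap.sub_apply, map_sub,
      LinearMap.map_sub, e11, e12, e13, e21, e22, e23, e31, e32, e33,
      g1x, g2x, g3x, gx1, gx2, gx3, g11, g22, g33, g12, g13, g23, g21, g31, g32,
      hx, map_neg, LinearMap.map_neg, LinearMap.neg_apply, neg_neg] <;>
    module
end

section
/- Let (Φ1,Φ2,Φ3) be a Cliff(1,1)-structure on (V,g) of signature (2,2). Then 3R_0 = -R_{Φ1} + R_{Φ2} + R_{Φ3} as algebraic curvature tensors on V. -/
/-- The (tri)linear "polarized completeness" expression. -/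
def Smap {V : Type*} [AddCommGroup V] [Module ℝ V]
    (g : V →ₗ[ℝ] V →ₗ[ℝ] ℝ) (Φ₁ Φ₂ Φ₃ : V →ₗ[ℝ] V) (w : V) :
    V →ₗ[ℝ] V →ₗ[ℝ] V :=
  LinearMap.mk₂ ℝ (fun u v =>
    g w u • v + g w v • u + g w (Φ₁ u) • Φ₁ v + g w (Φ₁ v) • Φ₁ u
      - g w (Φ₂ u) • Φ₂ v - g w (Φ₂ v) • Φ₂ u
      - g w (Φ₃ u) • Φ₃ v - g w (Φ₃ v) • Φ₃ u - (2 * g u v) • w)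
    (fun u₁ u₂ v => by
      simp only [map_add, LinearMap.add_apply, add_smul, mul_add, add_mul]
      module)
    (fun c u v => by
      simp only [map_smul, LinearMap.smul_apply, smul_eq_mul, mul_smul,
        mul_assoc, mul_left_comm]
      module)
    (fun u v₁ v₂ => by
      simp only [map_add, LinearMap.add_apply, add_smul, mul_add, add_mul]
      module)
    (fun c u v => by
      simp only [map_smul, LinearMap.smul_apply, smul_eq_mul, mul_smul,
        mul_assoc, mul_left_comm]
      module)

theorem Smap_apply {V : Type*} [AddCommGroup V] [Module ℝ V]
    (g : V →ₗ[ℝ] V →ₗ[ℝ] ℝ) (Φ₁ Φ₂ Φ₃ : V →ₗ[ℝ] V) (w u v : V) :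
    Smap g Φ₁ Φ₂ Φ₃ w u v =
    g w u • v + g w v • u + g w (Φ₁ u) • Φ₁ v + g w (Φ₁ v) • Φ₁ u
      - g w (Φ₂ u) • Φ₂ v - g w (Φ₂ v) • Φ₂ u
      - g w (Φ₃ u) • Φ₃ v - g w (Φ₃ v) • Φ₃ u - (2 * g u v) • w := rfl

/-- Completeness identity for a Cliff(1,1) structure on a 4-dim space, at a non-null x. -/
theorem keyC {V : Type*} [AddCommGroup V] [Module ℝ V]
    (g : V →ₗ[ℝ] V →ₗ[ℝ] ℝ) (hsymm : ∀ v w, g v w = g w v)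
    (e : Module.Basis (Fin 4) ℝ V)
    (Φ₁ Φ₂ Φ₃ : V →ₗ[ℝ] V)
    (hskew₁ : ∀ v w, g (Φ₁ v) w = - g v (Φ₁ w))
    (hskew₂ : ∀ v w, g (Φ₂ v) w = - g v (Φ₂ w))
    (hskew₃ : ∀ v w, g (Φ₃ v) w = - g v (Φ₃ w))
    (hsq₁ : Φ₁ ∘ₗ Φ₁ = -LinearMap.id)
    (hsq₂ : Φ₂ ∘ₗ Φ₂ = LinearMap.id) (hsq₃ : Φ₃ ∘ₗ Φ₃ = LinearMap.id)
    (hac₁₂ : Φ₁ ∘ₗ Φ₂ + Φ₂ ∘ₗ Φ₁ = 0) (hac₁₃ : Φ₁ ∘ₗ Φ₃ + Φ₃ ∘ₗ Φ₁ = 0)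
    (hac₂₃ : Φ₂ ∘ₗ Φ₃ + Φ₃ ∘ₗ Φ₂ = 0)
    (x : V) (hx : g x x ≠ 0) (z : V) :
    g z x • x + g z (Φ₁ x) • Φ₁ x - g z (Φ₂ x) • Φ₂ x - g z (Φ₃ x) • Φ₃ x
      = g x x • z := by
  set c := g x x with hc
  have hsq₁' : Φ₁ (Φ₁ x) = -x := by
    have := LinearMap.ext_iff.mp hsq₁ x; simpa using this
  have hsq₂' : Φ₂ (Φ₂ x) = x := by
    have := LinearMap.ext_iff.mp hsq₂ x; simpa using this
  have hsq₃' : Φ₃ (Φ₃ x) = x := by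
    have := LinearMap.ext_iff.mp hsq₃ x; simpa using this
  have hac₁₂' : Φ₂ (Φ₁ x) = -Φ₁ (Φ₂ x) := by
    have := LinearMap.ext_iff.mp hac₁₂ x
    simp only [LinearMap.add_apply, LinearMap.comp_apply, LinearMap.zero_apply] at this
    exact eq_neg_of_add_eq_zero_right this
  have hac₁₃' : Φ₃ (Φ₁ x) = -Φ₁ (Φ₃ x) := by
    have := LinearMap.ext_iff.mp hac₁₃ x
    simp only [LinearMap.add_apply, LinearMap.comp_apply, LinearMap.zero_apply] at this
    exact eq_neg_of_add_eq_zero_right this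
  have hac₂₃' : Φ₃ (Φ₂ x) = -Φ₂ (Φ₃ x) := by
    have := LinearMap.ext_iff.mp hac₂₃ x
    simp only [LinearMap.add_apply, LinearMap.comp_apply, LinearMap.zero_apply] at this
    exact eq_neg_of_add_eq_zero_right this
  -- Gram matrix facts
  have h01 : g x (Φ₁ x) = 0 := by
    have h := hskew₁ x x; have h2 := hsymm x (Φ₁ x); linarith
  have h02 : g x (Φ₂ x) = 0 := by
    have h := hskew₂ x x; have h2 := hsymm x (Φ₂ x); linarith
  have h03 : g x (Φ₃ x) = 0 := by
    have h := hskew₃ x x; have h2 := hsymm x (Φ₃ x); linarith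
  have h11 : g (Φ₁ x) (Φ₁ x) = c := by
    rw [hskew₁, hsq₁', map_neg]; simp [hc]
  have h22 : g (Φ₂ x) (Φ₂ x) = -c := by rw [hskew₂, hsq₂']
  have h33 : g (Φ₃ x) (Φ₃ x) = -c := by rw [hskew₃, hsq₃']
  have h12 : g (Φ₁ x) (Φ₂ x) = 0 := by
    have ha : g (Φ₁ x) (Φ₂ x) = -g x (Φ₁ (Φ₂ x)) := hskew₁ x (Φ₂ x)
    have hb : g (Φ₂ x) (Φ₁ x) = -g x (Φ₂ (Φ₁ x)) := hskew₂ x (Φ₁ x)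
    rw [hac₁₂', map_neg] at hb
    have hs := hsymm (Φ₁ x) (Φ₂ x)
    linarith
  have h13 : g (Φ₁ x) (Φ₃ x) = 0 := by
    have ha : g (Φ₁ x) (Φ₃ x) = -g x (Φ₁ (Φ₃ x)) := hskew₁ x (Φ₃ x)
    have hb : g (Φ₃ x) (Φ₁ x) = -g x (Φ₃ (Φ₁ x)) := hskew₃ x (Φ₁ x)
    rw [hac₁₃', map_neg] at hb
    have hs := hsymm (Φ₁ x) (Φ₃ x)
    linarith
  have h23 : g (Φ₂ x) (Φ₃ x) = 0 := by
    have ha : g (Φ₂ x) (Φ₃ x) = -g x (Φ₂ (Φ₃ x)) := hskew₂ x (Φ₃ x)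
    have hb : g (Φ₃ x) (Φ₂ x) = -g x (Φ₃ (Φ₂ x)) := hskew₃ x (Φ₂ x)
    rw [hac₂₃', map_neg] at hb
    have hs := hsymm (Φ₂ x) (Φ₃ x)
    linarith
  have h10 : g (Φ₁ x) x = 0 := by rw [hsymm]; exact h01
  have h20 : g (Φ₂ x) x = 0 := by rw [hsymm]; exact h02
  have h30 : g (Φ₃ x) x = 0 := by rw [hsymm]; exact h03
  have h21 : g (Φ₂ x) (Φ₁ x) = 0 := by rw [hsymm]; exact h12
  have h31 : g (Φ₃ x) (Φ₁ x) = 0 := by rw [hsymm]; exact h13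
  have h32 : g (Φ₃ x) (Φ₂ x) = 0 := by rw [hsymm]; exact h23
  -- the frame
  set f : Fin 4 → V := ![x, Φ₁ x, Φ₂ x, Φ₃ x] with hf
  have hGram : ∀ i j, g (f i) (f j) =
      (if i = j then (if (i : ℕ) < 2 then c else -c) else 0) := by
    intro i j
    fin_cases i <;> fin_cases j <;>
      simp [hf, h01, h02, h03, h10, h20, h30, h11, h22, h33, h12, h13, h23,
        h21, h31, h32, hc]
  have hli : LinearIndependent ℝ f := by
    rw [Fintype.linearIndependent_iff]
    intro a ha j
    have := congrArg (fun v => g v (f j)) ha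
    simp only [map_sum, map_smul, LinearMap.smul_apply, LinearMap.sum_apply,
      map_zero, LinearMap.zero_apply, smul_eq_mul] at this
    rw [Finset.sum_eq_single j] at this
    · rw [hGram] at this
      simp only [if_pos rfl] at this
      rcases lt_or_ge (j : ℕ) 2 with h | h
      · rw [if_pos h] at this
        rcases mul_eq_zero.mp this with h' | h'
        · exact h'
        · exact absurd h' hx
      · rw [if_neg (not_lt.mpr h)] at this
        rcases mul_eq_zero.mp this with h' | h'
        · exact h'
        · exact absurd (neg_eq_zero.mp h') hx
    · intro i _ hij
      rw [hGram, if_neg hij, mul_zero]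
    · intro h; exact absurd (Finset.mem_univ j) h
  have hcard : Fintype.card (Fin 4) = Module.finrank ℝ V := by
    rw [Module.finrank_eq_card_basis e]
  have := Module.Finite.of_basis e
  let b : Module.Basis (Fin 4) ℝ V := basisOfLinearIndependentOfCardEqFinrank hli hcard
  have hb : ∀ i, b i = f i := fun i => by
    simp [b, coe_basisOfLinearIndependentOfCardEqFinrank]
  have hz : z = b.repr z 0 • x + b.repr z 1 • Φ₁ x + b.repr z 2 • Φ₂ x
      + b.repr z 3 • Φ₃ x := by
    conv_lhs => rw [← b.sum_repr z]
    rw [Fin.sum_univ_four, hb 0, hb 1, hb 2, hb 3]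
    simp [hf]
  set r0 := b.repr z 0; set r1 := b.repr z 1; set r2 := b.repr z 2
  set r3 := b.repr z 3
  have hg0 : g z x = c * r0 := by
    conv_lhs => rw [hz]
    simp only [map_add, map_smul, LinearMap.add_apply, LinearMap.smul_apply,
      smul_eq_mul, h10, h20, h30]
    rw [← hc]; ring
  have hg1 : g z (Φ₁ x) = c * r1 := by
    conv_lhs => rw [hz]
    simp only [map_add, map_smul, LinearMap.add_apply, LinearMap.smul_apply,
      smul_eq_mul, h01, h11, h21, h31]
    ring
  have hg2 : g z (Φ₂ x) = -(c * r2) := by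
    conv_lhs => rw [hz]
    simp only [map_add, map_smul, LinearMap.add_apply, LinearMap.smul_apply,
      smul_eq_mul, h02, h12, h22, h32]
    ring
  have hg3 : g z (Φ₃ x) = -(c * r3) := by
    conv_lhs => rw [hz]
    simp only [map_add, map_smul, LinearMap.add_apply, LinearMap.smul_apply,
      smul_eq_mul, h03, h13, h23, h33]
    ring
  rw [hg0, hg1, hg2, hg3]
  conv_rhs => rw [hz]
  module

/-- for a Cliff(1,1)-structure, `3R₀ = -R_{Φ₁} + R_{Φ₂} + R_{Φ₃}`. -/
theorem three_R0_eq {V : Type*} [AddCommGroup V] [Module ℝ V]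
    (g : V →ₗ[ℝ] V →ₗ[ℝ] ℝ) (hsymm : ∀ v w, g v w = g w v)
    (e : Module.Basis (Fin 4) ℝ V)
    (he : ∀ i j, g (e i) (e j) =
      if i = j then (if (i : ℕ) < 2 then (-1 : ℝ) else 1) else 0)
    (Φ₁ Φ₂ Φ₃ : V →ₗ[ℝ] V)
    (hskew₁ : ∀ v w, g (Φ₁ v) w = - g v (Φ₁ w))
    (hskew₂ : ∀ v w, g (Φ₂ v) w = - g v (Φ₂ w))
    (hskew₃ : ∀ v w, g (Φ₃ v) w = - g v (Φ₃ w))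
    (hsq₁ : Φ₁ ∘ₗ Φ₁ = -LinearMap.id)
    (hsq₂ : Φ₂ ∘ₗ Φ₂ = LinearMap.id) (hsq₃ : Φ₃ ∘ₗ Φ₃ = LinearMap.id)
    (hac₁₂ : Φ₁ ∘ₗ Φ₂ + Φ₂ ∘ₗ Φ₁ = 0) (hac₁₃ : Φ₁ ∘ₗ Φ₃ + Φ₃ ∘ₗ Φ₁ = 0)
    (hac₂₃ : Φ₂ ∘ₗ Φ₃ + Φ₃ ∘ₗ Φ₂ = 0)
    (hK : Φ₃ = Φ₂ ∘ₗ Φ₁) :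
    ∀ x y z : V, (3 : ℝ) • R0V g x y z =
      - RPhiV g Φ₁ x y z + RPhiV g Φ₂ x y z + RPhiV g Φ₃ x y z := by
  -- symmetry of Smap
  have Ssymm : ∀ w u v : V, Smap g Φ₁ Φ₂ Φ₃ w u v = Smap g Φ₁ Φ₂ Φ₃ w v u := by
    intro w u v
    rw [Smap_apply, Smap_apply, hsymm u v]
    module
  -- diagonal vanishing at non-null vectors
  have Sdiag : ∀ x : V, g x x ≠ 0 → ∀ w, Smap g Φ₁ Φ₂ Φ₃ w x x = 0 := by
    intro x hx w
    have hk := keyC g hsymm e Φ₁ Φ₂ Φ₃ hskew₁ hskew₂ hskew₃ hsq₁ hsq₂ hsq₃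
      hac₁₂ hac₁₃ hac₂₃ x hx w
    rw [Smap_apply]
    linear_combination (norm := module) (2:ℝ) • hk
  -- diagonal metric values
  have hdiagne : ∀ i : Fin 4, g (e i) (e i) ≠ 0 := by
    intro i
    rw [he i i, if_pos rfl]
    split_ifs <;> norm_num
  -- vanishing on basis pairs
  have hS0 : ∀ (w : V) (i j : Fin 4), Smap g Φ₁ Φ₂ Φ₃ w (e i) (e j) = 0 := by
    intro w i j
    by_cases hij : i = j
    · subst hij; exact Sdiag (e i) (hdiagne i) w
    · set u : V := e i + (2:ℝ) • e j with hu
      have hcross : g (e i) (e j) = 0 := by rw [he i j, if_neg hij]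
      have hcross' : g (e j) (e i) = 0 := by rw [hsymm]; exact hcross
      have hunn : g u u ≠ 0 := by
        have : g u u = g (e i) (e i) + 4 * g (e j) (e j) := by
          rw [hu]
          simp only [map_add, map_smul, LinearMap.add_apply, LinearMap.smul_apply,
            smul_eq_mul, hcross, hcross']
          ring
        rw [this, he i i, if_pos rfl, he j j, if_pos rfl]
        split_ifs <;> norm_num
      have h := Sdiag u hunn w
      rw [hu] at h
      simp only [map_add, map_smul, LinearMap.add_apply, LinearMap.smul_apply] at h
      rw [Sdiag (e i) (hdiagne i) w, Sdiag (e j) (hdiagne j) w,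
        Ssymm w (e j) (e i)] at h
      simp only [smul_zero, add_zero, zero_add, ← add_smul, smul_smul] at h
      have h4 : ((2:ℝ) + 2 * 2) ≠ 0 := by norm_num
      -- h should now read like ((2:ℝ) • X) + ... = 0 ; extract
      rcases smul_eq_zero.mp (by linear_combination (norm := module) h :
          ((4:ℝ)) • Smap g Φ₁ Φ₂ Φ₃ w (e i) (e j) = 0) with h' | h'
      · norm_num at h'
      · exact h'
  -- full vanishing
  have hP : ∀ w u v : V, Smap g Φ₁ Φ₂ Φ₃ w u v = 0 := by
    intro w
    have hz : Smap g Φ₁ Φ₂ Φ₃ w = 0 := by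
      apply Module.Basis.ext e
      intro i
      apply Module.Basis.ext e
      intro j
      simpa using hS0 w i j
    intro u v
    rw [hz]
    simp
  intro x y z
  have h1 := hP y x z
  have h2 := hP x y z
  rw [Smap_apply] at h1 h2
  rw [hsymm y x, hsymm y (Φ₁ x), hsymm y (Φ₂ x), hsymm y (Φ₃ x),
    hskew₁ x y, hskew₂ x y, hskew₃ x y] at h1
  simp only [R0V, RPhiV]
  rw [hskew₁ y z, hskew₁ x z, hskew₁ x y, hskew₂ y z, hskew₂ x z, hskew₂ x y,
    hskew₃ y z, hskew₃ x z, hskew₃ x y]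
  linear_combination (norm := module) h2 - h1
end

section
/- Let A be an algebraic curvature tensor on a signature (2,2) inner product space whose nonvanishing components in a pseudo-orthonormal basis {e1,e2,e3,e4} are A1221 = A4334 = -α, A1331 = A4224 = β, A1441 = A3223 = γ, A1234 = (2α-β-γ)/3, A1423 = (-α-β+2γ)/3, A1342 = (-α+2β-γ)/3 (together with those forced by curvature symmetries). Then J_A(e1) restricted to {e2,e3,e4} is the diagonal matrix diag(α, β, γ). -/
/-- Type I of Theorem 2.1: if the nonvanishing components of an
algebraic curvature tensor `A` in a pseudo-orthonormal basis `{e₁,e₂,e₃,e₄}`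
(indexed here by `Fin 4`) are the listed ones, then `J_A(e₁)` restricted to
`{e₂,e₃,e₄}` is the diagonal matrix `diag(α,β,γ)`. -/
theorem typeI_jacobi_diagonal {V : Type*} [AddCommGroup V] [Module ℝ V]
    (g : V →ₗ[ℝ] V →ₗ[ℝ] ℝ) (hsymm : ∀ v w, g v w = g w v)
    (e : Module.Basis (Fin 4) ℝ V)
    (he : ∀ i j, g (e i) (e j) =
      if i = j then (if (i : ℕ) < 2 then (-1 : ℝ) else 1) else 0)
    (A : V →ₗ[ℝ] V →ₗ[ℝ] V →ₗ[ℝ] V →ₗ[ℝ] ℝ)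
    (hA1 : ∀ x y z v, A x y z v = - A y x z v)
    (hA2 : ∀ x y z v, A x y z v = - A x y v z)
    (hA3 : ∀ x y z v, A x y z v = A z v x y)
    (hA4 : ∀ x y z v, A x y z v + A y z x v + A z x y v = 0)
    (α β γ : ℝ)
    (h1221 : A (e 0) (e 1) (e 1) (e 0) = -α)
    (h4334 : A (e 3) (e 2) (e 2) (e 3) = -α)
    (h1331 : A (e 0) (e 2) (e 2) (e 0) = β)
    (h4224 : A (e 3) (e 1) (e 1) (e 3) = β)
    (h1441 : A (e 0) (e 3) (e 3) (e 0) = γ)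
    (h3223 : A (e 2) (e 1) (e 1) (e 2) = γ)
    (h1234 : A (e 0) (e 1) (e 2) (e 3) = (2*α - β - γ)/3)
    (h1423 : A (e 0) (e 3) (e 1) (e 2) = (-α - β + 2*γ)/3)
    (h1342 : A (e 0) (e 2) (e 3) (e 1) = (-α + 2*β - γ)/3)
    (hvanish : ∀ i j k l : Fin 4,
      ({i, j, k, l} : Multiset (Fin 4)) ∉
        ([{0, 0, 1, 1}, {2, 2, 3, 3}, {0, 0, 2, 2}, {1, 1, 3, 3},
          {0, 0, 3, 3}, {1, 1, 2, 2}, {0, 1, 2, 3}] : List (Multiset (Fin 4))) →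
      A (e i) (e j) (e k) (e l) = 0) :
    ∀ i j : Fin 4, 1 ≤ (i : ℕ) → 1 ≤ (j : ℕ) →
      A (e i) (e 0) (e 0) (e j) =
        (if i = j then ![0, α, β, γ] i else 0) *
          (if (j : ℕ) < 2 then (-1 : ℝ) else 1) := by
  have flip : ∀ x y, A x y y x = A y x x y := by
    intro x y
    rw [hA1, hA2]; ring
  intro i j hi hj
  have hi' : i = 1 ∨ i = 2 ∨ i = 3 := by omega
  have hj' : j = 1 ∨ j = 2 ∨ j = 3 := by omega
  rcases hi' with rfl | rfl | rfl <;> rcases hj' with rfl | rfl | rfl <;>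
    simp [show ((3:Fin 4):ℕ) = 3 from rfl] <;>
    first
    | (rw [flip]; linarith)
    | (rw [hvanish _ _ _ _ (by decide)])
end
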